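/- Let (A, M) be a noetherian local ring that is reduced, with total quotient ring K_A and finite integral closure Ā, and suppose m ⊆ M is an ideal such that A/mA is reduced and A_P is normal for every minimal prime P of (0) and of mA. Let C be the conductor of A and C' the preimage in A of the conductor of A/mA. Then there exists h ∈ C ∩ C' such that h is a nonzerodivisor on A and a nonzerodivisor on A/mA; in particular hĀ ⊆ A and (the image of h) times the integral closure of A/mA lies in A/mA. -/

import Mathlib

set_option synthInstance.maxHeartbeats 1000000
set_option maxHeartbeats 1000000

universe u

open IsLocalRing

open scoped nonZeroDivisors

lemma key_loc {A : Type u} [CommRing A] (P : Ideal A) [P.IsPrime]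
    [IsDomain (Localization.AtPrime P)] [IsIntegrallyClosed (Localization.AtPrime P)]
    (x : FractionRing A) (hx : IsIntegral A x) :
    ∃ c ∈ P.primeCompl,
      algebraMap A (FractionRing A) c * x ∈ (algebraMap A (FractionRing A)).range := by
  set Ap := Localization.AtPrime P with hAp
  set F := FractionRing Ap with hF
  set g : A →+* F := (algebraMap Ap F).comp (algebraMap A Ap) with hg
  have hinv : ∀ s : A⁰, IsUnit (g s) := by
    intro s
    have h1 : algebraMap A Ap s ∈ Ap⁰ :=
      IsLocalization.nonZeroDivisors_le_comap P.primeCompl Ap s.2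
    exact IsLocalization.map_units F ⟨algebraMap A Ap s, h1⟩
  set χ : FractionRing A →+* F := IsLocalization.lift hinv with hχ
  have hχA : ∀ a : A, χ (algebraMap A (FractionRing A) a)
      = algebraMap Ap F (algebraMap A Ap a) := fun a => IsLocalization.lift_eq hinv a
  have hcomp : (algebraMap Ap F).comp (algebraMap A Ap)
      = χ.comp (algebraMap A (FractionRing A)) := by
    ext a; simp [hχA a]
  obtain ⟨p, pm, hp⟩ := hx
  have hintp : IsIntegral Ap (χ x) := by
    refine ⟨p.map (algebraMap A Ap), pm.map _, ?_⟩
    rw [Polynomial.eval₂_map, hcomp, ← Polynomial.hom_eval₂, hp, map_zero]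
  obtain ⟨α, hα⟩ := IsIntegrallyClosed.isIntegral_iff.mp hintp
  obtain ⟨⟨a, s⟩, hmk⟩ := IsLocalization.mk'_surjective P.primeCompl α
  have hker : χ (algebraMap A (FractionRing A) s * x - algebraMap A (FractionRing A) a) = 0 := by
    have h2 : algebraMap A Ap s * α = algebraMap A Ap a := by
      rw [← hmk, mul_comm]; exact IsLocalization.mk'_spec _ a s
    rw [map_sub, map_mul, hχA, hχA, ← hα]
    rw [← map_mul, h2, sub_self]
  set k : FractionRing A :=
    algebraMap A (FractionRing A) s * x - algebraMap A (FractionRing A) a with hk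
  obtain ⟨⟨b, t⟩, hbt⟩ := IsLocalization.mk'_surjective A⁰ k
  have hb : algebraMap A (FractionRing A) b = k * algebraMap A (FractionRing A) t := by
    rw [← hbt]; exact (IsLocalization.mk'_spec (FractionRing A) b t).symm
  have hb0 : algebraMap A Ap b = 0 := by
    have h4 : algebraMap Ap F (algebraMap A Ap b) = 0 := by
      rw [← hχA, hb, map_mul, hker, zero_mul]
    exact IsFractionRing.injective Ap F (by simpa using h4)
  obtain ⟨u, hu⟩ := (IsLocalization.map_eq_zero_iff P.primeCompl Ap b).mp hb0
  have huseful : algebraMap A (FractionRing A) u * k = 0 := by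
    have htu : IsUnit (algebraMap A (FractionRing A) t) :=
      IsLocalization.map_units (FractionRing A) t
    have h3 : (algebraMap A (FractionRing A) u * k) * algebraMap A (FractionRing A) t = 0 := by
      rw [mul_assoc, ← hb, ← map_mul, hu, map_zero]
    exact (htu.mul_left_eq_zero).mp h3
  refine ⟨u * s, mul_mem u.2 s.2, u * a, ?_⟩
  have h5 : algebraMap A (FractionRing A) u *
      (algebraMap A (FractionRing A) s * x - algebraMap A (FractionRing A) a) = 0 := huseful
  rw [map_mul, map_mul, mul_assoc]
  linear_combination -h5

/-- If the integral closure is finite and `A_P` is an integrally closed domain, the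
conductor is not contained in `P`. -/
lemma conductor_not_le {A : Type u} [CommRing A]
    [Module.Finite A (integralClosure A (FractionRing A))]
    (P : Ideal A) [P.IsPrime]
    [IsDomain (Localization.AtPrime P)] [IsIntegrallyClosed (Localization.AtPrime P)] :
    ∃ h ∈ (LinearMap.range (Algebra.linearMap A (FractionRing A))).colon
      (Subalgebra.toSubmodule (integralClosure A (FractionRing A))), h ∉ P := by
  classical
  obtain ⟨n, f, hf⟩ := Module.Finite.exists_fin (R := A)
    (M := integralClosure A (FractionRing A))
  choose c hc hcr using fun i : Fin n => key_loc P ((f i : FractionRing A)) (f i).2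
  refine ⟨∏ i, c i, ?_, ?_⟩
  · rw [Submodule.mem_colon]
    intro y hy
    -- y is in the span of the images of f
    have hy' : y ∈ Submodule.span A (Set.range fun i => (f i : FractionRing A)) := by
      have : (⟨y, hy⟩ : integralClosure A (FractionRing A)) ∈
          Submodule.span A (Set.range f) := hf ▸ Submodule.mem_top
      have h2 := Submodule.map_span (Subalgebra.toSubmodule
        (integralClosure A (FractionRing A))).subtype (Set.range f)
      have h3 : y ∈ Submodule.map (Subalgebra.toSubmodule
          (integralClosure A (FractionRing A))).subtype (Submodule.span A (Set.range f)) :=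
        ⟨⟨y, hy⟩, this, rfl⟩
      rw [h2] at h3
      rw [← Set.range_comp] at h3; exact h3
    refine Submodule.span_induction ?_ ?_ ?_ ?_ hy'
    · rintro z ⟨i, rfl⟩
      have : (∏ j, c j) • (f i : FractionRing A)
          = (∏ j ∈ Finset.univ.erase i, c j) • ((c i) • (f i : FractionRing A)) := by
        rw [smul_smul, ← Finset.prod_erase_mul Finset.univ c (Finset.mem_univ i)]
      rw [this]
      obtain ⟨a, ha⟩ := hcr i
      have hmem : (c i) • (f i : FractionRing A)
          ∈ LinearMap.range (Algebra.linearMap A (FractionRing A)) := by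
        refine ⟨a, ?_⟩
        simp only [Algebra.linearMap_apply, ha, Algebra.smul_def]
      exact Submodule.smul_mem _ _ hmem
    · simp
    · intro z w _ _ hz hw
      rw [smul_add]; exact Submodule.add_mem _ hz hw
    · intro a z _ hz
      rw [smul_comm]; exact Submodule.smul_mem _ _ hz
  · exact Submonoid.prod_mem _ (fun i _ => hc i)

/-- localization of a reduced ring at a minimal prime is a field, hence an
integrally closed domain. -/
lemma minimal_loc_nice {R : Type u} [CommRing R] [IsReduced R]
    {Q : Ideal R} [Q.IsPrime] (hQ : Q ∈ minimalPrimes R) :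
    IsDomain (Localization.AtPrime Q) ∧ IsIntegrallyClosed (Localization.AtPrime Q) := by
  have hfield : IsField (Localization.AtPrime Q) := by
    rw [IsLocalRing.isField_iff_maximalIdeal_eq]
    rw [eq_bot_iff]
    intro x hx
    have : IsNilpotent x :=
      haveI := Ring.KrullDimLE.of_isLocalization Q hQ (Localization.AtPrime Q)
      Ring.KrullDimLE.isNilpotent_iff_mem_maximalIdeal.mpr hx
    simpa using this.eq_zero
  letI := hfield.toField
  exact ⟨inferInstance, inferInstance⟩

/-- an element outside every minimal prime of a reduced ring is a nonzerodivisor. -/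
lemma nzd_of_notMem_minimal {R : Type u} [CommRing R] [IsReduced R] {h : R}
    (H : ∀ P ∈ minimalPrimes R, h ∉ P) : h ∈ nonZeroDivisors R := by
  rw [mem_nonZeroDivisors_iff_right]
  intro z hz
  have hzmem : z ∈ sInf (minimalPrimes R) := by
    rw [Submodule.mem_sInf]
    intro P hP
    haveI := hP.1.1
    rcases (Ideal.IsPrime.mem_or_mem hP.1.1 (show z * h ∈ P by rw [hz]; exact P.zero_mem)) with
      h1 | h1
    · exact h1
    · exact absurd h1 (H P hP)
  rw [show minimalPrimes R = (⊥ : Ideal R).minimalPrimes from rfl,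
    Ideal.sInf_minimalPrimes] at hzmem
  have h0 : (⊥ : Ideal R).radical = ⊥ := nilradical_eq_zero R
  rw [h0] at hzmem
  simpa using hzmem
/-- Let `(A, M)` be a reduced noetherian local ring with finite integral closure `Ā`, and
`m ⊆ M` an ideal such that `A/m` is reduced (with finite integral closure) and `A_P` is
normal for every minimal prime `P` of `(0)` and of `m`.  Let `C` be the conductor of `A`
and `C'` the preimage in `A` of the conductor of `A/m`.  Then there exists
`h ∈ C ∩ C'` which is a nonzerodivisor on `A` and on `A/m`; in particular `hĀ ⊆ A` and
(the image of) `h` multiplies the integral closure of `A/m` into `A/m`. -/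
theorem exists_conductor_element_regular_on_ring_and_fiber
    (A : Type u) [CommRing A] [IsNoetherianRing A] [IsLocalRing A] [IsReduced A]
    [Module.Finite A (integralClosure A (FractionRing A))]
    (m : Ideal A) (hm : m ≤ maximalIdeal A)
    (hred : IsReduced (A ⧸ m))
    [Module.Finite (A ⧸ m) (integralClosure (A ⧸ m) (FractionRing (A ⧸ m)))]
    (hnor : ∀ (P : Ideal A) [P.IsPrime],
      (P ∈ minimalPrimes A ∨ P ∈ m.minimalPrimes) →
      IsDomain (Localization.AtPrime P) ∧ IsIntegrallyClosed (Localization.AtPrime P)) :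
    ∃ h : A,
      h ∈ (LinearMap.range (Algebra.linearMap A (FractionRing A))).colon
            (Subalgebra.toSubmodule (integralClosure A (FractionRing A))) ∧
      h ∈ (((LinearMap.range (Algebra.linearMap (A ⧸ m) (FractionRing (A ⧸ m)))).colon
              (Subalgebra.toSubmodule
                (integralClosure (A ⧸ m) (FractionRing (A ⧸ m))))).comap
            (Ideal.Quotient.mk m)) ∧
      h ∈ nonZeroDivisors A ∧
      Ideal.Quotient.mk m h ∈ nonZeroDivisors (A ⧸ m) := by
  classical
  haveI := hred
  have hmne : m ≠ ⊤ := fun h => (maximalIdeal.isMaximal A).ne_top (top_le_iff.mp (h ▸ hm))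
  haveI : Nontrivial (A ⧸ m) := Ideal.Quotient.nontrivial_iff.mpr hmne
  set C : Ideal A := (LinearMap.range (Algebra.linearMap A (FractionRing A))).colon
      (Subalgebra.toSubmodule (integralClosure A (FractionRing A))) with hC_def
  set C' : Ideal A := (((LinearMap.range (Algebra.linearMap (A ⧸ m)
      (FractionRing (A ⧸ m)))).colon (Subalgebra.toSubmodule
      (integralClosure (A ⧸ m) (FractionRing (A ⧸ m))))).comap (Ideal.Quotient.mk m)) with hC'_def
  set T : Set (Ideal A) := minimalPrimes A ∪ m.minimalPrimes with hT_def
  have hTfin : T.Finite := by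
    refine (minimalPrimes.finite_of_isNoetherianRing A).union ?_
    rw [Ideal.minimalPrimes_eq_comap]
    exact (minimalPrimes.finite_of_isNoetherianRing (A ⧸ m)).image _
  have hprime : ∀ P ∈ T, P.IsPrime := fun P hP => hP.elim (fun h => h.1.1) (fun h => h.1.1)
  have hC : ∀ P ∈ T, ¬ C ≤ P := by
    intro P hP hle
    haveI := hprime P hP
    obtain ⟨hd, hic⟩ := hnor P hP
    obtain ⟨h, hh, hhP⟩ := conductor_not_le (A := A) P
    exact hhP (hle hh)
  have hC' : ∀ P ∈ T, ¬ C' ≤ P := by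
    intro P hP hle
    haveI := hprime P hP
    by_cases hmP : m ≤ P
    · have hPm : P ∈ m.minimalPrimes := by
        rcases hP with h | h
        · exact ⟨⟨h.1.1, hmP⟩, fun Q hQ hQP => h.2 ⟨hQ.1, bot_le⟩ hQP⟩
        · exact h
      rw [Ideal.minimalPrimes_eq_comap] at hPm
      obtain ⟨Q, hQmin, rfl⟩ := hPm
      haveI : Q.IsPrime := hQmin.1.1
      obtain ⟨hd, hic⟩ := minimal_loc_nice hQmin
      obtain ⟨h', hh', hh'Q⟩ := conductor_not_le (A := A ⧸ m) Q
      have h2 := (Ideal.comap_le_comap_iff_of_surjective (Ideal.Quotient.mk m)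
        Ideal.Quotient.mk_surjective _ _).mp hle
      exact hh'Q (h2 hh')
    · obtain ⟨t, htm, htP⟩ := SetLike.not_le_iff_exists.mp hmP
      refine htP (hle ?_)
      show t ∈ C'
      rw [hC'_def, Ideal.mem_comap, Ideal.Quotient.eq_zero_iff_mem.mpr htm]
      exact Submodule.zero_mem _
  have havoid : ¬ ((C ⊓ C' : Ideal A) : Set A) ⊆ ⋃ P ∈ (↑hTfin.toFinset : Set (Ideal A)), (P : Set A) := by
    rw [Ideal.subset_union_prime ⊥ ⊥ (fun P hPs _ _ => hprime P (hTfin.mem_toFinset.mp hPs))]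
    rintro ⟨P, hPs, hle⟩
    have hPT := hTfin.mem_toFinset.mp hPs
    haveI := hprime P hPT
    have hmul : C * C' ≤ P := le_trans Ideal.mul_le_inf hle
    rcases ((Ideal.IsPrime.mul_le (hprime P hPT)).mp hmul) with h1 | h1
    · exact hC P hPT h1
    · exact hC' P hPT h1
  obtain ⟨h, hh, hnot⟩ := Set.not_subset.mp havoid
  have hnot' : ∀ P ∈ T, h ∉ P := by
    intro P hPT hhP
    exact hnot (Set.mem_biUnion (by simpa using hPT) hhP)
  refine ⟨h, hh.1, hh.2, ?_, ?_⟩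
  · exact nzd_of_notMem_minimal (fun P hP => hnot' P (Or.inl hP))
  · refine nzd_of_notMem_minimal (fun Q hQ hhQ => ?_)
    have : (Ideal.comap (Ideal.Quotient.mk m) Q) ∈ m.minimalPrimes := by
      rw [Ideal.minimalPrimes_eq_comap]
      exact ⟨Q, hQ, rfl⟩
    exact hnot' _ (Or.inr this) hhQ
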